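/- Averaged two-body energy identity and exchange bound: let W : (Fin J)⁴ → ℂ be antisymmetric within each index pair, i.e., W(i,j,k,l) = −W(j,i,k,l) = −W(i,j,l,k) for all indices, and set M_{ij} := Σ_{n=1}^N conj(G^{(n)}_i) G^{(n)}_j. Then ∫_{[0,1]^J} Σ_{m,n=1}^N Σ_{i,j,k,l=1}^J conj(c^θ_{m,i}) conj(c^θ_{n,j}) c^θ_{m,k} c^θ_{n,l} W(i,j,k,l) dθ = Σ_{i,j=1}^J (λ_i λ_j − |M_{ij}|²) · W(i,j,i,j). If in addition W(i,j,i,j) is a nonnegative real number for all i, j, then this integral is real and at most Σ_{i,j=1}^J λ_i λ_j W(i,j,i,j). -/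

import Mathlib

open MeasureTheory
open scoped Real

/-- The phase-modulated coefficients `c^θ_{n,j} := e^{2πiθ_j} G⁽ⁿ⁾_j`. -/
noncomputable def phaseCoeff {N J : ℕ} (G : Fin N → EuclideanSpace ℂ (Fin J))
    (θ : Fin J → ℝ) (n : Fin N) (j : Fin J) : ℂ :=
  Complex.exp (2 * π * Complex.I * (θ j : ℂ)) * G n j

/-- The phase-averaged two-body energy
`∫_{[0,1]^J} Σ_{m,n} Σ_{i,j,k,l} conj(c^θ_{m,i}) conj(c^θ_{n,j}) c^θ_{m,k} c^θ_{n,l} W(i,j,k,l) dθ`. -/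
noncomputable def twoBodyAverage {N J : ℕ} (G : Fin N → EuclideanSpace ℂ (Fin J))
    (W : Fin J → Fin J → Fin J → Fin J → ℂ) : ℂ :=
  ∫ θ : Fin J → ℝ in Set.univ.pi fun _ : Fin J => Set.Icc (0 : ℝ) 1,
    ∑ m : Fin N, ∑ n : Fin N, ∑ i : Fin J, ∑ j : Fin J, ∑ k : Fin J, ∑ l : Fin J,
      (starRingEnd ℂ) (phaseCoeff G θ m i) * (starRingEnd ℂ) (phaseCoeff G θ n j)
        * phaseCoeff G θ m k * phaseCoeff G θ n l * W i j k l

noncomputable def box (J : ℕ) : Set (Fin J → ℝ) := Set.univ.pi fun _ : Fin J => Set.Icc (0:ℝ) 1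

def eps {J : ℕ} (i j k l : Fin J) (p : Fin J) : ℤ :=
  (if k = p then 1 else 0) + (if l = p then 1 else 0)
    - (if i = p then 1 else 0) - (if j = p then 1 else 0)

lemma integral_exp_unit (a : ℤ) :
    ∫ t in Set.Icc (0:ℝ) 1, Complex.exp (2*π*Complex.I*(a:ℂ)*(t:ℂ))
      = if a = 0 then 1 else 0 := by
  rw [MeasureTheory.integral_Icc_eq_integral_Ioc,
      ← intervalIntegral.integral_of_le (zero_le_one)]
  by_cases h : a = 0
  · simp [h]
  · have hc : (2*(π:ℂ)*Complex.I*(a:ℂ)) ≠ 0 := by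
      simp [Real.pi_ne_zero, Complex.I_ne_zero, h, Complex.ext_iff]
    rw [if_neg h, integral_exp_mul_complex hc]
    have h1 : Complex.exp (2*(π:ℂ)*Complex.I*(a:ℂ)) = 1 := by
      rw [show (2*(π:ℂ)*Complex.I*(a:ℂ)) = (a:ℂ) * (2*π*Complex.I) by push_cast; ring]
      exact Complex.exp_int_mul_two_pi_mul_I a
    push_cast
    rw [mul_one, mul_zero, h1]
    simp

lemma box_integral_prod {J : ℕ} (e : Fin J → ℤ) :
    ∫ θ : Fin J → ℝ in box J, ∏ p, Complex.exp (2*π*Complex.I*(e p : ℂ)*(θ p : ℂ))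
      = if (∀ p, e p = 0) then 1 else 0 := by
  have hmeas : MeasurableSet (box J) := MeasurableSet.univ_pi fun _ => measurableSet_Icc
  rw [← MeasureTheory.integral_indicator hmeas]
  have hind : (box J).indicator
        (fun θ : Fin J → ℝ => ∏ p, Complex.exp (2*π*Complex.I*(e p:ℂ)*(θ p:ℂ)))
      = fun θ => ∏ p, (Set.Icc (0:ℝ) 1).indicator
          (fun t => Complex.exp (2*π*Complex.I*(e p:ℂ)*(t:ℂ))) (θ p) := by
    funext θ
    by_cases hθ : θ ∈ box J
    · rw [Set.indicator_of_mem hθ]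
      exact Finset.prod_congr rfl fun p _ =>
        (Set.indicator_of_mem (hθ p (Set.mem_univ p))
          (fun t => Complex.exp (2*π*Complex.I*(e p:ℂ)*(t:ℂ)))).symm
    · rw [Set.indicator_of_notMem hθ]
      have : ∃ p, θ p ∉ Set.Icc (0:ℝ) 1 := by
        by_contra hcon
        push_neg at hcon
        exact hθ fun p _ => hcon p
      obtain ⟨p, hp⟩ := this
      exact (Finset.prod_eq_zero (Finset.mem_univ p) (Set.indicator_of_notMem hp _)).symm
  rw [hind, MeasureTheory.integral_fintype_prod_volume_eq_prod
    (f := fun p t => (Set.Icc (0:ℝ) 1).indicator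
          (fun t => Complex.exp (2*π*Complex.I*(e p:ℂ)*(t:ℂ))) t)]
  have : ∀ p : Fin J, (∫ t, (Set.Icc (0:ℝ) 1).indicator
      (fun t => Complex.exp (2*π*Complex.I*(e p:ℂ)*(t:ℂ))) t)
      = if e p = 0 then 1 else 0 := by
    intro p
    rw [MeasureTheory.integral_indicator measurableSet_Icc]
    exact integral_exp_unit (e p)
  simp_rw [this]
  by_cases h : ∀ p, e p = 0
  · simp [h]
  · rw [if_neg h]
    push_neg at h
    obtain ⟨p, hp⟩ := h
    exact Finset.prod_eq_zero (Finset.mem_univ p) (by simp [hp])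

lemma eps_zero_iff {J : ℕ} (i j k l : Fin J) :
    (∀ p, eps i j k l p = 0) ↔ ((k = i ∧ l = j) ∨ (k = j ∧ l = i)) := by
  constructor
  · intro h
    by_cases hik : k = i
    · left
      refine ⟨hik, ?_⟩
      subst hik
      have hl := h l
      by_cases hjl : j = l
      · exact hjl.symm
      · exfalso; unfold eps at hl; split_ifs at hl <;> simp_all
    · right
      have hkk := h k
      have hkj : k = j := by
        by_contra hkj
        unfold eps at hkk
        split_ifs at hkk <;> simp_all
      refine ⟨hkj, ?_⟩
      subst hkj
      have hl := h l
      by_cases hil : i = l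
      · exact hil.symm
      · exfalso; unfold eps at hl; split_ifs at hl <;> simp_all
  · rintro (⟨rfl, rfl⟩ | ⟨rfl, rfl⟩) p <;> (unfold eps; split_ifs <;> simp_all)

lemma pointwise {N J : ℕ} (G : Fin N → EuclideanSpace ℂ (Fin J)) (θ : Fin J → ℝ)
    (m n : Fin N) (i j k l : Fin J) (w : ℂ) :
    (starRingEnd ℂ) (phaseCoeff G θ m i) * (starRingEnd ℂ) (phaseCoeff G θ n j)
      * phaseCoeff G θ m k * phaseCoeff G θ n l * w
    = (∏ p, Complex.exp (2*π*Complex.I*(eps i j k l p : ℂ)*(θ p : ℂ)))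
        * ((starRingEnd ℂ) (G m i) * (starRingEnd ℂ) (G n j) * G m k * G n l * w) := by
  have hc : ∀ t : ℝ, (starRingEnd ℂ) (Complex.exp (2*π*Complex.I*(t:ℂ)))
      = Complex.exp (-(2*π*Complex.I*(t:ℂ))) := by
    intro t
    rw [← Complex.exp_conj]
    congr 1
    simp only [map_mul, Complex.conj_I, Complex.conj_ofReal, map_ofNat]
    ring
  have hprod : (∏ p, Complex.exp (2*π*Complex.I*(eps i j k l p : ℂ)*(θ p:ℂ)))
      = Complex.exp (2*π*Complex.I*(θ k:ℂ)) * Complex.exp (2*π*Complex.I*(θ l:ℂ))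
        * Complex.exp (-(2*π*Complex.I*(θ i:ℂ))) * Complex.exp (-(2*π*Complex.I*(θ j:ℂ))) := by
    rw [← Complex.exp_sum]
    have hterm : ∀ p, 2*(π:ℂ)*Complex.I*((eps i j k l p : ℤ):ℂ)*(θ p:ℂ)
        = (if k = p then 2*(π:ℂ)*Complex.I*(θ p:ℂ) else 0)
          + (if l = p then 2*(π:ℂ)*Complex.I*(θ p:ℂ) else 0)
          - (if i = p then 2*(π:ℂ)*Complex.I*(θ p:ℂ) else 0)
          - (if j = p then 2*(π:ℂ)*Complex.I*(θ p:ℂ) else 0) := by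
      intro p
      unfold eps
      split_ifs <;> push_cast <;> ring
    rw [show (∑ p, 2*(π:ℂ)*Complex.I*((eps i j k l p : ℤ):ℂ)*(θ p:ℂ))
        = ∑ p, ((if k = p then 2*(π:ℂ)*Complex.I*(θ p:ℂ) else 0)
          + (if l = p then 2*(π:ℂ)*Complex.I*(θ p:ℂ) else 0)
          - (if i = p then 2*(π:ℂ)*Complex.I*(θ p:ℂ) else 0)
          - (if j = p then 2*(π:ℂ)*Complex.I*(θ p:ℂ) else 0))
      from Finset.sum_congr rfl fun p _ => hterm p]
    simp only [Finset.sum_sub_distrib, Finset.sum_add_distrib, Finset.sum_ite_eq,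
      Finset.mem_univ, if_true]
    rw [← Complex.exp_add, ← Complex.exp_add, ← Complex.exp_add]
    congr 1
    try ring
  rw [hprod]
  simp only [phaseCoeff, map_mul, hc]
  ring

lemma ite_or_split (P Q : Prop) [Decidable P] [Decidable Q] :
    (if P ∨ Q then (1:ℂ) else 0)
      = (if P then (1:ℂ) else 0) + (if Q then 1 else 0) - (if P ∧ Q then 1 else 0) := by
  by_cases hP : P <;> by_cases hQ : Q <;> simp [hP, hQ]

lemma sum_pair {J : ℕ} (i j : Fin J) (f : Fin J → Fin J → ℂ) :
    ∑ k, ∑ l, (if k = i ∧ l = j then (1:ℂ) else 0) * f k l = f i j := by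
  rw [Fintype.sum_eq_single i]
  · rw [Fintype.sum_eq_single j]
    · simp
    · intro l hl; simp [hl]
  · intro k hk
    refine Finset.sum_eq_zero fun l _ => ?_
    simp [hk]

lemma sum_overlap {J : ℕ} (i j : Fin J) (f : Fin J → Fin J → ℂ) :
    ∑ k, ∑ l, (if (k = i ∧ l = j) ∧ (k = j ∧ l = i) then (1:ℂ) else 0) * f k l
      = if i = j then f i i else 0 := by
  by_cases hij : i = j
  · subst hij
    rw [if_pos rfl]
    have he : ∀ k l : Fin J, (if (k = i ∧ l = i) ∧ (k = i ∧ l = i) then (1:ℂ) else 0)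
        = (if k = i ∧ l = i then (1:ℂ) else 0) := by
      intro k l; by_cases h : k = i ∧ l = i <;> simp [h]
    simp_rw [he]
    exact sum_pair i i f
  · rw [if_neg hij]
    refine Finset.sum_eq_zero fun k _ => Finset.sum_eq_zero fun l _ => ?_
    have : ¬ ((k = i ∧ l = j) ∧ (k = j ∧ l = i)) := by
      rintro ⟨⟨h3, -⟩, ⟨h1, -⟩⟩
      exact hij (h3.symm.trans h1)
    simp [this]

lemma sum_or {J : ℕ} (i j : Fin J) (f : Fin J → Fin J → ℂ) :
    ∑ k, ∑ l, (if (k = i ∧ l = j) ∨ (k = j ∧ l = i) then (1:ℂ) else 0) * f k l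
      = f i j + f j i - (if i = j then f i i else 0) := by
  simp only [ite_or_split, sub_mul, add_mul, Finset.sum_sub_distrib, Finset.sum_add_distrib]
  rw [sum_pair i j f, sum_pair j i f, sum_overlap i j f]

lemma sum_sum_mul {α : Type*} [Fintype α] (a b : α → ℂ) (w : ℂ) :
    ∑ m : α, ∑ n : α, a m * b n * w = (∑ m, a m) * (∑ n, b n) * w := by
  rw [Finset.sum_mul, Finset.sum_mul]
  refine Finset.sum_congr rfl fun m _ => ?_
  rw [Finset.mul_sum, Finset.sum_mul]

lemma term_int {J : ℕ} (e : Fin J → ℤ) (c : ℂ) :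
    ∫ θ : Fin J → ℝ in box J, (∏ p, Complex.exp (2*π*Complex.I*(e p:ℂ)*(θ p:ℂ))) * c
      = (if ∀ p, e p = 0 then (1:ℂ) else 0) * c := by
  have h := integral_smul_const (μ := volume.restrict (box J))
    (f := fun θ : Fin J → ℝ => ∏ p, Complex.exp (2*π*Complex.I*(e p:ℂ)*(θ p:ℂ))) c
  simp only [smul_eq_mul] at h
  rw [h, box_integral_prod]

lemma cont_integrable {J : ℕ} (e : Fin J → ℤ) (c : ℂ) :
    MeasureTheory.IntegrableOn
      (fun θ : Fin J → ℝ => (∏ p, Complex.exp (2*π*Complex.I*(e p:ℂ)*(θ p:ℂ))) * c)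
      (box J) := by
  refine (Continuous.continuousOn ?_).integrableOn_compact
    (isCompact_univ_pi fun _ => isCompact_Icc)
  exact (continuous_finset_prod _ fun p _ => Complex.continuous_exp.comp
    ((continuous_const.mul (Complex.continuous_ofReal.comp (continuous_apply p))))).mul
    continuous_const

lemma key {N J : ℕ} (G : Fin N → EuclideanSpace ℂ (Fin J))
    (W : Fin J → Fin J → Fin J → Fin J → ℂ) :
    twoBodyAverage G W = ∑ m : Fin N, ∑ n : Fin N, ∑ i : Fin J, ∑ j : Fin J, ∑ k : Fin J,
      ∑ l : Fin J,
      (if ∀ p, eps i j k l p = 0 then (1:ℂ) else 0)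
        * ((starRingEnd ℂ) (G m i) * (starRingEnd ℂ) (G n j) * G m k * G n l * W i j k l) := by
  rw [twoBodyAverage]
  rw [show (Set.univ.pi fun _ : Fin J => Set.Icc (0:ℝ) 1) = box J from rfl]
  simp_rw [pointwise]
  simp only [← Fintype.sum_prod_type']
  rw [MeasureTheory.integral_finset_sum _ (fun x _ => cont_integrable _ _)]
  simp_rw [term_int]


/-- **Averaged two-body energy identity and exchange bound**: for `W` antisymmetric in each
index pair and `M_{ij} := Σ_n conj(G⁽ⁿ⁾_i) G⁽ⁿ⁾_j`, the average equals
`Σ_{i,j} (λ_i λ_j − |M_{ij}|²) W(i,j,i,j)`; if moreover each `W(i,j,i,j)` is a nonnegative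
real, the average is real and at most `Σ_{i,j} λ_i λ_j W(i,j,i,j)`. -/
theorem averaged_two_body_energy (N J : ℕ) (hN : 0 < N) (hNJ : N ≤ J)
    (G : Fin N → EuclideanSpace ℂ (Fin J)) (hG : Orthonormal ℂ G)
    (W : Fin J → Fin J → Fin J → Fin J → ℂ)
    (hW1 : ∀ i j k l, W i j k l = - W j i k l)
    (hW2 : ∀ i j k l, W i j k l = - W i j l k) :
    twoBodyAverage G W
      = ∑ i : Fin J, ∑ j : Fin J,
          (((∑ n : Fin N, ‖G n i‖ ^ 2) * (∑ n : Fin N, ‖G n j‖ ^ 2)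
              - ‖∑ n : Fin N, (starRingEnd ℂ) (G n i) * G n j‖ ^ 2 : ℝ) : ℂ) * W i j i j
    ∧ ((∀ i j, (W i j i j).im = 0 ∧ 0 ≤ (W i j i j).re) →
        (twoBodyAverage G W).im = 0 ∧
        (twoBodyAverage G W).re
          ≤ ∑ i : Fin J, ∑ j : Fin J,
              (∑ n : Fin N, ‖G n i‖ ^ 2) * (∑ n : Fin N, ‖G n j‖ ^ 2) * (W i j i j).re) := by
  have hWdiag : ∀ i : Fin J, W i i i i = 0 := by
    intro i
    have h2 : (2:ℂ) * W i i i i = 0 := by linear_combination hW1 i i i i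
    exact (mul_eq_zero.mp h2).resolve_left two_ne_zero
  have hmain : twoBodyAverage G W
      = ∑ i : Fin J, ∑ j : Fin J,
          (((∑ n : Fin N, ‖G n i‖ ^ 2) * (∑ n : Fin N, ‖G n j‖ ^ 2)
              - ‖∑ n : Fin N, (starRingEnd ℂ) (G n i) * G n j‖ ^ 2 : ℝ) : ℂ) * W i j i j := by
    rw [key G W]
    simp only [eps_zero_iff]
    calc
      ∑ m : Fin N, ∑ n : Fin N, ∑ i : Fin J, ∑ j : Fin J, ∑ k : Fin J, ∑ l : Fin J,
          (if (k = i ∧ l = j) ∨ (k = j ∧ l = i) then (1:ℂ) else 0)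
            * ((starRingEnd ℂ) (G m i) * (starRingEnd ℂ) (G n j) * G m k * G n l * W i j k l)
        = ∑ m : Fin N, ∑ n : Fin N, ∑ i : Fin J, ∑ j : Fin J,
            ((starRingEnd ℂ) (G m i) * (starRingEnd ℂ) (G n j) * G m i * G n j * W i j i j
             + (starRingEnd ℂ) (G m i) * (starRingEnd ℂ) (G n j) * G m j * G n i * W i j j i) := by
          refine Finset.sum_congr rfl fun m _ => Finset.sum_congr rfl fun n _ =>
            Finset.sum_congr rfl fun i _ => Finset.sum_congr rfl fun j _ => ?_
          rw [sum_or i j (fun k l =>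
            (starRingEnd ℂ) (G m i) * (starRingEnd ℂ) (G n j) * G m k * G n l * W i j k l)]
          have hz : (if i = j then
              (starRingEnd ℂ) (G m i) * (starRingEnd ℂ) (G n j) * G m i * G n i * W i j i i
              else 0) = 0 := by
            split_ifs with h
            · subst h; rw [hWdiag i, mul_zero]
            · rfl
          rw [hz, sub_zero]
      _ = ∑ i : Fin J, ∑ j : Fin J, ∑ m : Fin N, ∑ n : Fin N,
            ((starRingEnd ℂ) (G m i) * (starRingEnd ℂ) (G n j) * G m i * G n j * W i j i j
             + (starRingEnd ℂ) (G m i) * (starRingEnd ℂ) (G n j) * G m j * G n i * W i j j i) := by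
          rw [Finset.sum_congr rfl fun m _ => Finset.sum_comm]
          rw [Finset.sum_comm]
          refine Finset.sum_congr rfl fun i _ => ?_
          rw [Finset.sum_congr rfl fun m _ => Finset.sum_comm]
          exact Finset.sum_comm
      _ = ∑ i : Fin J, ∑ j : Fin J,
          (((∑ n : Fin N, ‖G n i‖ ^ 2) * (∑ n : Fin N, ‖G n j‖ ^ 2)
              - ‖∑ n : Fin N, (starRingEnd ℂ) (G n i) * G n j‖ ^ 2 : ℝ) : ℂ) * W i j i j := by
          refine Finset.sum_congr rfl fun i _ => Finset.sum_congr rfl fun j _ => ?_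
          rw [Finset.sum_congr rfl fun m (_ : m ∈ Finset.univ) => Finset.sum_add_distrib,
            Finset.sum_add_distrib]
          have e1 : ∑ m : Fin N, ∑ n : Fin N,
              (starRingEnd ℂ) (G m i) * (starRingEnd ℂ) (G n j) * G m i * G n j * W i j i j
              = (∑ m : Fin N, (starRingEnd ℂ) (G m i) * G m i)
                * (∑ n : Fin N, (starRingEnd ℂ) (G n j) * G n j) * W i j i j := by
            rw [← sum_sum_mul]
            exact Finset.sum_congr rfl fun m _ => Finset.sum_congr rfl fun n _ => by ring
          have e2 : ∑ m : Fin N, ∑ n : Fin N,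
              (starRingEnd ℂ) (G m i) * (starRingEnd ℂ) (G n j) * G m j * G n i * W i j j i
              = (∑ m : Fin N, (starRingEnd ℂ) (G m i) * G m j)
                * (∑ n : Fin N, (starRingEnd ℂ) (G n j) * G n i) * W i j j i := by
            rw [← sum_sum_mul]
            exact Finset.sum_congr rfl fun m _ => Finset.sum_congr rfl fun n _ => by ring
          rw [e1, e2]
          have hA : ∀ p : Fin J, (∑ m : Fin N, (starRingEnd ℂ) (G m p) * G m p)
              = (((∑ m : Fin N, ‖G m p‖ ^ 2 : ℝ)) : ℂ) := by
            intro p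
            push_cast
            exact Finset.sum_congr rfl fun m _ => RCLike.conj_mul (G m p)
          have hConj : (∑ n : Fin N, (starRingEnd ℂ) (G n j) * G n i)
              = (starRingEnd ℂ) (∑ n : Fin N, (starRingEnd ℂ) (G n i) * G n j) := by
            rw [map_sum]
            refine Finset.sum_congr rfl fun n _ => ?_
            rw [map_mul, Complex.conj_conj]
            ring
          have hMM : (∑ m : Fin N, (starRingEnd ℂ) (G m i) * G m j)
                * (starRingEnd ℂ) (∑ n : Fin N, (starRingEnd ℂ) (G n i) * G n j)
              = ((‖∑ n : Fin N, (starRingEnd ℂ) (G n i) * G n j‖ : ℂ)) ^ 2 := by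
            rw [mul_comm]
            exact RCLike.conj_mul (K := ℂ) (∑ n : Fin N, (starRingEnd ℂ) (G n i) * G n j)
          rw [hA i, hA j, hConj, hW2 i j j i, hMM]
          push_cast
          ring
  refine ⟨hmain, fun hre => ?_⟩
  constructor
  · rw [hmain, Complex.im_sum]
    refine Finset.sum_eq_zero fun i _ => ?_
    rw [Complex.im_sum]
    refine Finset.sum_eq_zero fun j _ => ?_
    rw [Complex.mul_im, Complex.ofReal_im, zero_mul, add_zero, (hre i j).1, mul_zero]
  · rw [hmain, Complex.re_sum]
    refine Finset.sum_le_sum fun i _ => ?_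
    rw [Complex.re_sum]
    refine Finset.sum_le_sum fun j _ => ?_
    rw [Complex.mul_re, Complex.ofReal_re, Complex.ofReal_im, zero_mul, sub_zero]
    exact mul_le_mul_of_nonneg_right
      (sub_le_self _ (sq_nonneg _)) (hre i j).2
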